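/- Let k ≥ 2 be an integer and let G be a graph that is the union of k + 1 galaxies on the same vertex set. Then χ(G) ≤ 2k. -/

import Mathlib

open SimpleGraph

/-- A galaxy: every connected component is a star, i.e. each component has a
center vertex incident to all of the component's edges. -/
def IsGalaxy {V : Type*} (H : SimpleGraph V) : Prop :=
  ∀ C : H.ConnectedComponent, ∃ c ∈ C.supp,
    ∀ u v : V, H.Adj u v → u ∈ C.supp → (u = c ∨ v = c)

open Finset in
theorem galaxy_aux (k : ℕ) (hk : 2 ≤ k) {V : Type} [Fintype V] (G : SimpleGraph V)
    (H : Fin (k + 1) → SimpleGraph V) (c : Fin (k + 1) → V → V)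
    (hc : ∀ i u v, (H i).Adj u v → c i u = c i v ∧ (u = c i u ∨ v = c i u))
    (hGa : ∀ u v, G.Adj u v ↔ ∃ i, (H i).Adj u v) :
    ∀ (n : ℕ) (S : Finset V), S.card ≤ n →
      ∃ f : V → Fin (2 * k), ∀ u ∈ S, ∀ v ∈ S, G.Adj u v → f u ≠ f v := by
  classical
  intro n
  induction n with
  | zero =>
    intro S hS
    have hS0 : S = ∅ := Finset.card_eq_zero.mp (Nat.le_zero.mp hS)
    exact ⟨fun _ => ⟨0, by omega⟩, by simp [hS0]⟩
  | succ n ih =>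
    intro S hS
    by_cases hex : ∃ v ∈ S, (S.filter (fun w => G.Adj v w)).card < 2 * k
    · -- low degree vertex: recurse on S.erase v
      obtain ⟨v, hvS, hdeg⟩ := hex
      obtain ⟨f, hf⟩ := ih (S.erase v) (by
        have h1 := Finset.card_erase_of_mem hvS
        have h2 : 1 ≤ S.card := Finset.card_pos.mpr ⟨v, hvS⟩
        omega)
      -- pick a color not used on v's neighbors in S
      set T := (S.filter (fun w => G.Adj v w)).image f with hT
      have hTc : T.card < 2 * k := by
        rw [hT]
        exact lt_of_le_of_lt Finset.card_image_le hdeg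
      have hcompl : (Tᶜ : Finset (Fin (2 * k))).Nonempty := by
        rw [← Finset.card_pos, Finset.card_compl]
        simp only [Fintype.card_fin]
        omega
      obtain ⟨a, ha⟩ := hcompl
      have haT : a ∉ T := Finset.mem_compl.mp ha
      refine ⟨Function.update f v a, ?_⟩
      intro u hu w hw huw
      by_cases hu' : u = v <;> by_cases hw' : w = v
      · rw [hu', hw'] at huw
        exact absurd huw (G.loopless.irrefl v)
      · rw [hu'] at huw ⊢
        rw [Function.update_self, Function.update_of_ne hw']
        intro hcontra
        apply haT
        rw [hcontra]
        exact Finset.mem_image_of_mem f (Finset.mem_filter.mpr ⟨hw, huw⟩)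
      · rw [hw'] at huw ⊢
        rw [Function.update_of_ne hu', Function.update_self]
        intro hcontra
        apply haT
        rw [← hcontra]
        exact Finset.mem_image_of_mem f (Finset.mem_filter.mpr ⟨hu, huw.symm⟩)
      · rw [Function.update_of_ne hu', Function.update_of_ne hw']
        exact hf u (Finset.mem_erase.mpr ⟨hu', hu⟩) w (Finset.mem_erase.mpr ⟨hw', hw⟩) huw
    · -- all degrees ≥ 2k: tight case
      push_neg at hex
      set Out : V → Finset (Fin (k + 1)) :=
        fun v => Finset.univ.filter (fun i => (H i).Adj v (c i v) ∧ c i v ∈ S) with hOutdef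
      have hOutmem : ∀ v i, i ∈ Out v ↔ ((H i).Adj v (c i v) ∧ c i v ∈ S) := by
        intro v i; simp [hOutdef]
      -- every vertex of S is a non-leaf in at least one galaxy
      have hOutlt : ∀ v ∈ S, (Out v).card ≤ k := by
        intro v hv
        by_contra hlt
        push_neg at hlt
        have hcard : (Out v).card = k + 1 := by
          have := Finset.card_le_univ (Out v)
          simp only [Finset.card_univ, Fintype.card_fin] at this
          omega
        have hfull : Out v = Finset.univ :=
          Finset.eq_univ_of_card _ (by simp [hcard])
        have hsub : S.filter (fun w => G.Adj v w) ⊆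
            Finset.univ.image (fun i => c i v) := by
          intro w hw
          rw [Finset.mem_filter] at hw
          obtain ⟨i, hi⟩ := (hGa v w).mp hw.2
          obtain ⟨hcc, hor⟩ := hc i v w hi
          have hvOut : i ∈ Out v := hfull ▸ Finset.mem_univ i
          have hvne : v ≠ c i v := ((hOutmem v i).mp hvOut).1.ne
          rcases hor with h | h
          · exact absurd h hvne
          · exact Finset.mem_image.mpr ⟨i, Finset.mem_univ i, h.symm⟩
        have h1 := Finset.card_le_card hsub
        have h2 : (Finset.univ.image (fun i : Fin (k+1) => c i v)).card ≤ k + 1 := by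
          calc _ ≤ (Finset.univ : Finset (Fin (k+1))).card := Finset.card_image_le
          _ = k + 1 := by simp
        have h3 := hex v hv
        omega
      -- double counting: ordered adjacent pairs vs arcs
      set P : Finset (Σ _ : V, V) := S.sigma (fun v => S.filter (fun w => G.Adj v w)) with hPdef
      set A : Finset (Σ _ : V, V) := S.sigma (fun v => (Out v).image (fun i => c i v)) with hAdef
      set φ : (Σ _ : V, V) → (Σ _ : V, V) := fun p =>
        if h : ∃ i, (H i).Adj p.1 p.2 then
          (if p.1 = c h.choose p.1 then ⟨p.2, p.1⟩ else ⟨p.1, p.2⟩)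
        else p with hφdef
      have hmaps : ∀ p ∈ P, φ p ∈ A := by
        intro p hp
        rw [hPdef, Finset.mem_sigma, Finset.mem_filter] at hp
        obtain ⟨hp1, hp2, hadj⟩ := hp
        have h : ∃ i, (H i).Adj p.1 p.2 := (hGa p.1 p.2).mp hadj
        have hi : (H h.choose).Adj p.1 p.2 := h.choose_spec
        set i := h.choose with hidef
        obtain ⟨hcc, hor⟩ := hc i p.1 p.2 hi
        rw [hφdef]
        simp only [dif_pos h, ← hidef]
        by_cases hcase : p.1 = c i p.1
        · rw [if_pos hcase, hAdef, Finset.mem_sigma]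
          refine ⟨hp2, ?_⟩
          have hc2 : c i p.2 = p.1 := by rw [← hcc, ← hcase]
          have hiOut : i ∈ Out p.2 := (hOutmem p.2 i).mpr ⟨by rw [hc2]; exact hi.symm,
            by rw [hc2]; exact hp1⟩
          exact Finset.mem_image.mpr ⟨i, hiOut, hc2⟩
        · rw [if_neg hcase, hAdef, Finset.mem_sigma]
          refine ⟨hp1, ?_⟩
          have h2 : p.2 = c i p.1 := hor.resolve_left hcase
          have hiOut : i ∈ Out p.1 := (hOutmem p.1 i).mpr ⟨by rw [← h2]; exact hi,
            by rw [← h2]; exact hp2⟩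
          exact Finset.mem_image.mpr ⟨i, hiOut, h2.symm⟩
      have hfib : ∀ a ∈ A, (P.filter (fun p => φ p = a)).card ≤ 2 := by
        intro a _
        have hsub : P.filter (fun p => φ p = a) ⊆ {⟨a.1, a.2⟩, ⟨a.2, a.1⟩} := by
          intro p hp
          rw [Finset.mem_filter] at hp
          have hpa := hp.2
          have hφp : φ p = p ∨ φ p = ⟨p.2, p.1⟩ := by
            rw [hφdef]
            dsimp only
            split_ifs with h1 h2
            · right; rfl
            · left; rfl
            · left; rfl
          rcases hφp with h | h
          · rw [h] at hpa
            rw [← hpa]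
            simp
          · rw [h] at hpa
            rw [← hpa]
            simp
        calc (P.filter (fun p => φ p = a)).card ≤ ({⟨a.1, a.2⟩, ⟨a.2, a.1⟩} :
            Finset (Σ _ : V, V)).card := Finset.card_le_card hsub
          _ ≤ 2 := by
            apply (Finset.card_insert_le _ _).trans
            simp
      have hPA : P.card ≤ 2 * A.card :=
        Finset.card_le_mul_card_image_of_maps_to hmaps 2 hfib
      have hPcard : P.card = ∑ v ∈ S, (S.filter (fun w => G.Adj v w)).card :=
        Finset.card_sigma _ _
      have hAcard : A.card = ∑ v ∈ S, ((Out v).image (fun i => c i v)).card :=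
        Finset.card_sigma _ _
      have hPlow : 2 * k * S.card ≤ P.card := by
        rw [hPcard]
        calc 2 * k * S.card = ∑ _v ∈ S, 2 * k := by
              rw [Finset.sum_const, smul_eq_mul]; ring
          _ ≤ _ := Finset.sum_le_sum (fun v hv => hex v hv)
      have hAup : A.card ≤ ∑ v ∈ S, (Out v).card := by
        rw [hAcard]
        exact Finset.sum_le_sum (fun v _ => Finset.card_image_le)
      -- conclude every vertex has exactly k out-galaxies
      have hOutEq : ∀ v ∈ S, (Out v).card = k := by
        intro v hv
        by_contra hne
        have h1 : (Out v).card < k := lt_of_le_of_ne (hOutlt v hv) hne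
        have h2 : ∑ w ∈ S, (Out w).card < ∑ _w ∈ S, k :=
          Finset.sum_lt_sum (fun w hw => hOutlt w hw) ⟨v, hv, h1⟩
        rw [Finset.sum_const, smul_eq_mul] at h2
        have hfin : 2 * k * S.card < 2 * k * S.card := by
          calc 2 * k * S.card ≤ P.card := hPlow
            _ ≤ 2 * A.card := hPA
            _ ≤ 2 * ∑ w ∈ S, (Out w).card := Nat.mul_le_mul_left 2 hAup
            _ < 2 * (S.card * k) := by
                exact mul_lt_mul_of_pos_left h2 (by norm_num)
            _ = 2 * k * S.card := by ring
        exact absurd hfin (lt_irrefl _)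
      -- the coloring by the unique missing galaxy index
      set σ : V → Fin (k + 1) := fun v =>
        if h : (Finset.univ \ Out v).Nonempty then (Finset.univ \ Out v).min' h
        else ⟨0, by omega⟩ with hσdef
      have hcompl1 : ∀ v ∈ S, (Finset.univ \ Out v).card = 1 := by
        intro v hv
        rw [Finset.card_sdiff_of_subset (Finset.subset_univ _)]
        simp [hOutEq v hv]
      have hσmem : ∀ v ∈ S, σ v ∉ Out v := by
        intro v hv
        have hne : (Finset.univ \ Out v).Nonempty := by
          rw [← Finset.card_pos, hcompl1 v hv]; omega
        rw [hσdef]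
        simp only [dif_pos hne]
        have := Finset.min'_mem _ hne
        exact (Finset.mem_sdiff.mp this).2
      have hσeq : ∀ v ∈ S, ∀ i, i ∉ Out v → σ v = i := by
        intro v hv i hi
        obtain ⟨j, hj⟩ := Finset.card_eq_one.mp (hcompl1 v hv)
        have h1 : i ∈ Finset.univ \ Out v := Finset.mem_sdiff.mpr ⟨Finset.mem_univ i, hi⟩
        have h2 : σ v ∈ Finset.univ \ Out v := by
          have hne : (Finset.univ \ Out v).Nonempty := ⟨i, h1⟩
          rw [hσdef]
          simp only [dif_pos hne]
          exact Finset.min'_mem _ hne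
        rw [hj, Finset.mem_singleton] at h1 h2
        rw [h2, h1]
      refine ⟨fun v => Fin.castLE (by omega : k + 1 ≤ 2 * k) (σ v), ?_⟩
      intro u hu v hv huv
      obtain ⟨i, hi⟩ := (hGa u v).mp huv
      obtain ⟨hcc, hor⟩ := hc i u v hi
      have key : ∀ x y : V, x ∈ S → y ∈ S → (H i).Adj x y → x = c i x →
          σ x = i ∧ σ y ≠ i := by
        intro x y hx hy hxy hcx
        obtain ⟨hccxy, _⟩ := hc i x y hxy
        constructor
        · apply hσeq x hx i
          intro hmem
          have := ((hOutmem x i).mp hmem).1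
          rw [← hcx] at this
          exact (H i).loopless.irrefl x this
        · have hcy : c i y = x := by rw [← hccxy, ← hcx]
          have hiOut : i ∈ Out y := (hOutmem y i).mpr
            ⟨by rw [hcy]; exact hxy.symm, by rw [hcy]; exact hx⟩
          intro hcontra
          exact hσmem y hy (hcontra ▸ hiOut)
      intro hcontra
      have hσσ : σ u = σ v := by
        have := Fin.castLE_injective (by omega : k + 1 ≤ 2 * k) hcontra
        exact this
      rcases hor with h | h
      · obtain ⟨h1, h2⟩ := key u v hu hv hi h
        exact h2 (hσσ ▸ h1)
      · have hv' : v = c i v := by rw [← hcc]; exact h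
        obtain ⟨h1, h2⟩ := key v u hv hu hi.symm hv'
        exact h2 (hσσ ▸ h1)

/-- For `k ≥ 2`, every graph which is the union of `k + 1` galaxies on the same
vertex set has chromatic number at most `2k`. -/
theorem stmt16 (k : ℕ) (hk : 2 ≤ k) {V : Type} [Fintype V] (G : SimpleGraph V)
    (H : Fin (k + 1) → SimpleGraph V) (hH : ∀ i, IsGalaxy (H i))
    (hG : G = ⨆ i, H i) :
    G.chromaticNumber ≤ ((2 * k : ℕ) : ℕ∞) := by
  classical
  have hc' : ∀ i : Fin (k + 1), ∃ ci : V → V, ∀ u v, (H i).Adj u v →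
      (ci u = ci v ∧ (u = ci u ∨ v = ci u)) := by
    intro i
    refine ⟨fun v => ((hH i) ((H i).connectedComponentMk v)).choose, ?_⟩
    intro u v huv
    have hcomp : (H i).connectedComponentMk u = (H i).connectedComponentMk v :=
      ConnectedComponent.sound huv.reachable
    constructor
    · dsimp only
      rw [hcomp]
    · have hspec := ((hH i) ((H i).connectedComponentMk u)).choose_spec
      dsimp only
      exact hspec.2 u v huv (by rw [ConnectedComponent.mem_supp_iff])
  choose cf hcf using hc'
  obtain ⟨f, hf⟩ := galaxy_aux k hk G H cf hcf
    (by intro u v; rw [hG]; exact iSup_adj)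
    (Finset.univ : Finset V).card Finset.univ le_rfl
  have hcol : G.Colorable (2 * k) :=
    ⟨Coloring.mk f (fun {u v} h => hf u (Finset.mem_univ u) v (Finset.mem_univ v) h)⟩
  exact hcol.chromaticNumber_le
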